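/- Suppose G is a finite group, G' = [G,G] is cyclic of square-free order, and G = ⟨a⟩G' for some a ∈ G (i.e., a together with G' generates G). Then a does not centralize any nontrivial subgroup of G'; equivalently, for every nonidentity γ ∈ G', [a,γ] ≠ e. -/

import Mathlib

open scoped commutatorElement

/-- If `G' = [G,G]` is cyclic of square-free order and `G = ⟨a⟩ G'`, then `a` does not
centralize any nontrivial element of `G'`. -/
theorem stmt_3 {G : Type*} [Group G] [Finite G] (a : G)
    (hcyc : IsCyclic (commutator G))
    (hsf : Squarefree (Nat.card (commutator G)))
    (hgen : Subgroup.zpowers a ⊔ commutator G = ⊤) :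
    ∀ γ ∈ commutator G, γ ≠ 1 → γ⁻¹ * a⁻¹ * γ * a ≠ 1 := by
  classical
  -- G' is abelian
  have hcomm : ∀ x y : G, x ∈ commutator G → y ∈ commutator G → x * y = y * x := by
    obtain ⟨g, hg⟩ := hcyc
    intro x y hx hy
    obtain ⟨m, hm⟩ := hg ⟨x, hx⟩
    obtain ⟨n, hn⟩ := hg ⟨y, hy⟩
    have h : (⟨x, hx⟩ : ↥(commutator G)) * ⟨y, hy⟩ = ⟨y, hy⟩ * ⟨x, hx⟩ := by
      rw [← hm, ← hn]; exact ((Commute.refl g).zpow_zpow m n)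
    exact congrArg Subtype.val h
  have hmem : ∀ c : G, ⁅c, a⁆ ∈ commutator G := fun c => by
    rw [commutator_def]
    exact Subgroup.commutator_mem_commutator (Subgroup.mem_top c) (Subgroup.mem_top a)
  -- the endomorphism of G'
  let φ : ↥(commutator G) →* ↥(commutator G) :=
  { toFun := fun c => ⟨⁅(c : G), a⁆, hmem c⟩
    map_one' := by ext; simp
    map_mul' := by
      intro c d
      ext
      show ⁅((c : G) * d), a⁆ = ⁅(c : G), a⁆ * ⁅(d : G), a⁆
      have h1 : (c : G) * ⁅(d : G), a⁆ = ⁅(d : G), a⁆ * c := hcomm _ _ c.2 (hmem d)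
      have h2 : ⁅(c : G), a⁆ * ⁅(d : G), a⁆ = ⁅(d : G), a⁆ * ⁅(c : G), a⁆ :=
        hcomm _ _ (hmem c) (hmem d)
      calc ⁅(c : G) * d, a⁆ = (c : G) * ⁅(d : G), a⁆ * ((c : G)⁻¹ * ⁅(c : G), a⁆) := by
            simp only [commutatorElement_def]; group
        _ = ⁅(d : G), a⁆ * (c : G) * ((c : G)⁻¹ * ⁅(c : G), a⁆) := by rw [h1]
        _ = ⁅(d : G), a⁆ * ⁅(c : G), a⁆ := by group
        _ = ⁅(c : G), a⁆ * ⁅(d : G), a⁆ := h2.symm }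
  -- the subgroup generated by the image
  set s : Set G := (fun c => ⁅c, a⁆) '' ((commutator G : Subgroup G) : Set G) with hs
  set S : Subgroup G := Subgroup.closure s with hS
  have hgenmem : ∀ c ∈ commutator G, ⁅c, a⁆ ∈ S := fun c hc =>
    Subgroup.subset_closure ⟨c, hc, rfl⟩
  -- conjugation stability helper
  have conj_closure : ∀ b : G, (∀ x ∈ s, b * x * b⁻¹ ∈ S) → ∀ x ∈ S, b * x * b⁻¹ ∈ S := by
    intro b hb x hx
    have hle : S ≤ Subgroup.comap ((MulAut.conj b).toMonoidHom) S := by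
      rw [hS]
      apply (Subgroup.closure_le _).mpr
      intro y hy
      simpa [Subgroup.mem_comap] using hb y hy
    simpa [Subgroup.mem_comap] using hle hx
  have conj_a : ∀ x ∈ s, a * x * a⁻¹ ∈ S := by
    rintro x ⟨c, hc, rfl⟩
    have h : a * ⁅c, a⁆ * a⁻¹ = ⁅a * c * a⁻¹, a⁆ := by
      simp only [commutatorElement_def]; group
    rw [h]
    exact hgenmem _ (Subgroup.Normal.conj_mem inferInstance c hc a)
  have conj_a' : ∀ x ∈ s, a⁻¹ * x * a⁻¹⁻¹ ∈ S := by
    rintro x ⟨c, hc, rfl⟩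
    have h : a⁻¹ * ⁅c, a⁆ * a⁻¹⁻¹ = ⁅a⁻¹ * c * a⁻¹⁻¹, a⁆ := by
      simp only [commutatorElement_def]; group
    rw [h]
    exact hgenmem _ (Subgroup.Normal.conj_mem inferInstance c hc a⁻¹)
  have conj_c : ∀ d ∈ commutator G, ∀ x ∈ s, d * x * d⁻¹ ∈ S := by
    rintro d hd x ⟨c, hc, rfl⟩
    have h : d * ⁅c, a⁆ = ⁅c, a⁆ * d := hcomm _ _ hd (hmem c)
    have h' : d * ⁅c, a⁆ * d⁻¹ = ⁅c, a⁆ := by rw [h]; group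
    rw [h']
    exact hgenmem _ hc
  -- S is normal
  have hSnormal : S.Normal := by
    rw [← Subgroup.normalizer_eq_top_iff, eq_top_iff, ← hgen, sup_le_iff]
    constructor
    · rw [Subgroup.zpowers_le, Subgroup.mem_normalizer_iff]
      intro h
      constructor
      · exact fun hh => conj_closure a conj_a h hh
      · intro hh
        have := conj_closure a⁻¹ conj_a' _ hh
        simpa [mul_assoc] using this
    · intro d hd
      rw [Subgroup.mem_normalizer_iff]
      intro h
      constructor
      · exact fun hh => conj_closure d (conj_c d hd) h hh
      · intro hh
        have hd' : d⁻¹ ∈ commutator G := (commutator G).inv_mem hd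
        have := conj_closure d⁻¹ (conj_c d⁻¹ hd') _ hh
        simpa [mul_assoc] using this
  haveI := hSnormal
  set π := QuotientGroup.mk' S with hπ
  have hker : ∀ c ∈ commutator G, π ⁅c, a⁆ = 1 := by
    intro c hc
    rw [hπ, ← MonoidHom.mem_ker, QuotientGroup.ker_mk']
    exact hgenmem c hc
  -- step 1 : images of G' are central in G/S
  have step1 : ∀ c ∈ commutator G, ∀ g : G, π g * π c = π c * π g := by
    intro c hc
    have hle : Subgroup.zpowers a ⊔ commutator G ≤
        Subgroup.comap π (Subgroup.centralizer {π c}) := by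
      apply sup_le
      · rw [Subgroup.zpowers_le, Subgroup.mem_comap, Subgroup.mem_centralizer_singleton_iff]
        have h1 := hker c hc
        rw [map_commutatorElement] at h1
        have h2 : Commute (π c) (π a) := commutatorElement_eq_one_iff_commute.mp h1
        exact h2.symm.eq
      · intro d hd
        rw [Subgroup.mem_comap, Subgroup.mem_centralizer_singleton_iff]
        have h := hcomm d c hd hc
        calc π d * π c = π (d * c) := (map_mul π d c).symm
          _ = π (c * d) := by rw [h]
          _ = π c * π d := map_mul π c d
    intro g
    have hg : g ∈ Subgroup.comap π (Subgroup.centralizer {π c}) := by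
      rw [hgen] at hle; exact hle (Subgroup.mem_top g)
    exact Subgroup.mem_centralizer_singleton_iff.mp (Subgroup.mem_comap.mp hg)
  -- step 2 : image of a is central in G/S
  have step2 : ∀ g : G, π g * π a = π a * π g := by
    have hle : Subgroup.zpowers a ⊔ commutator G ≤
        Subgroup.comap π (Subgroup.centralizer {π a}) := by
      apply sup_le
      · rw [Subgroup.zpowers_le, Subgroup.mem_comap, Subgroup.mem_centralizer_singleton_iff]
      · intro d hd
        rw [Subgroup.mem_comap, Subgroup.mem_centralizer_singleton_iff]
        exact (step1 d hd a).symm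
    intro g
    have hg : g ∈ Subgroup.comap π (Subgroup.centralizer {π a}) := by
      rw [hgen] at hle; exact hle (Subgroup.mem_top g)
    exact Subgroup.mem_centralizer_singleton_iff.mp (Subgroup.mem_comap.mp hg)
  -- step 3 : G/S is abelian
  have step3 : ∀ g h : G, π h * π g = π g * π h := by
    intro g
    have hle : Subgroup.zpowers a ⊔ commutator G ≤
        Subgroup.comap π (Subgroup.centralizer {π g}) := by
      apply sup_le
      · rw [Subgroup.zpowers_le, Subgroup.mem_comap, Subgroup.mem_centralizer_singleton_iff]
        exact (step2 g).symm
      · intro d hd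
        rw [Subgroup.mem_comap, Subgroup.mem_centralizer_singleton_iff]
        exact (step1 d hd g).symm
    intro h
    have hg : h ∈ Subgroup.comap π (Subgroup.centralizer {π g}) := by
      rw [hgen] at hle; exact hle (Subgroup.mem_top h)
    exact Subgroup.mem_centralizer_singleton_iff.mp (Subgroup.mem_comap.mp hg)
  -- hence G' ≤ S
  have hle : commutator G ≤ S := by
    rw [commutator_def, Subgroup.commutator_le]
    intro g _ h _
    have h1 : π ⁅g, h⁆ = 1 := by
      rw [map_commutatorElement]
      exact commutatorElement_eq_one_iff_commute.mpr (step3 h g)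
    rwa [hπ, ← MonoidHom.mem_ker, QuotientGroup.ker_mk'] at h1
  -- φ is surjective
  have hrange : Subgroup.map (commutator G).subtype φ.range = commutator G := by
    apply le_antisymm (Subgroup.map_subtype_le _)
    refine le_trans hle ?_
    rw [hS]
    apply (Subgroup.closure_le _).mpr
    rintro x ⟨c, hc, rfl⟩
    exact ⟨φ ⟨c, hc⟩, ⟨⟨c, hc⟩, rfl⟩, rfl⟩
  have hsurj : Function.Surjective φ := by
    rw [← MonoidHom.range_eq_top]
    apply Subgroup.map_injective (commutator G).subtype_injective
    rw [hrange, ← MonoidHom.range_eq_map, Subgroup.range_subtype]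
  have hinj : Function.Injective φ := Finite.injective_iff_surjective.mpr hsurj
  -- conclusion
  intro γ hγ hne heq
  have hc : Commute γ⁻¹ a⁻¹ := by
    apply commutatorElement_eq_one_iff_commute.mp
    simpa [commutatorElement_def] using heq
  have hca : Commute γ a := by
    have := hc.inv_inv
    simpa using this
  have h1 : φ ⟨γ, hγ⟩ = 1 := by
    ext
    show ⁅γ, a⁆ = 1
    exact commutatorElement_eq_one_iff_commute.mpr hca
  have h2 : (⟨γ, hγ⟩ : ↥(commutator G)) = 1 := hinj (by rw [h1, map_one])
  exact hne (by simpa using congrArg Subtype.val h2)
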